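/- Fix integers n ≥ 4 and 2 ≤ k ≤ n−2. Let x_1, …, x_n be distinct positive real numbers, let A_n := [1 + x_i x_j]_{1≤i,j≤n}, let R_{n,k} be the n×n diagonal matrix whose last k diagonal entries equal 1 and all other entries equal 0, and set A_{n,k,ε} := A_n + ε R_{n,k} for ε > 0. Then for every α ∈ [0, n−k−2], the entrywise power matrix A_{n,k,ε}^{∘α} is positive semi-definite if and only if α is an integer. -/

import Mathlib

/-- The `α`th Hadamard (entrywise) power of a real matrix, using the real power
function `Real.rpow` (so that `0 ^ 0 = 1`). -/
noncomputable def hadamardPower {n : ℕ} (A : Matrix (Fin n) (Fin n) ℝ) (α : ℝ) :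
    Matrix (Fin n) (Fin n) ℝ :=
  Matrix.of fun i j => (A i j) ^ α

open Finset Set Matrix

noncomputable def bc (β : ℝ) (m : ℕ) : ℝ := (∏ i ∈ Finset.range m, (β - i)) / m.factorial

lemma bc_one (β : ℝ) : bc β 1 = β := by simp [bc]

lemma bc_succ' (β : ℝ) (m : ℕ) : (m + 1 : ℝ) * bc β (m + 1) = β * bc (β - 1) m := by
  rw [bc, bc, Finset.prod_range_succ', Nat.factorial_succ]
  have h : ∀ i ∈ Finset.range m, β - (i + 1 : ℕ) = (β - 1) - i := by intro i _; push_cast; ring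
  rw [Finset.prod_congr rfl h]
  have hf : (m.factorial : ℝ) ≠ 0 := by exact_mod_cast Nat.factorial_ne_zero m
  have hm : ((m : ℝ) + 1) ≠ 0 := by positivity
  push_cast
  rw [sub_zero]
  field_simp

noncomputable def Rm (β : ℝ) (m : ℕ) (u : ℝ) : ℝ :=
  (1 + u) ^ β - ∑ j ∈ Finset.range (m + 1), bc β j * u ^ j

lemma Rm_zero (β : ℝ) (m : ℕ) : Rm β m 0 = 0 := by
  simp [Rm, Finset.sum_range_succ', bc, pow_succ]

lemma Rm_hasDeriv0 (β : ℝ) (u : ℝ) (hu : 0 ≤ u) :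
    HasDerivAt (Rm β 0) (β * (1 + u) ^ (β - 1)) u := by
  have h1 : (1 : ℝ) + u ≠ 0 := by positivity
  have hrp : HasDerivAt (fun v : ℝ => (1 + v) ^ β) (β * (1 + u) ^ (β - 1)) u := by
    have := (HasDerivAt.const_add 1 (hasDerivAt_id u)).rpow_const (p := β) (Or.inl h1)
    simpa using this
  have : HasDerivAt (fun v : ℝ => (1 + v) ^ β - ∑ j ∈ Finset.range 1, bc β j * v ^ j)
      (β * (1 + u) ^ (β - 1)) u := by
    simpa [bc] using hrp.sub_const 1
  exact this

lemma Rm_hasDeriv (β : ℝ) (m : ℕ) (u : ℝ) (hu : 0 ≤ u) :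
    HasDerivAt (Rm β (m + 1)) (β * Rm (β - 1) m u) u := by
  have h1 : (1 : ℝ) + u ≠ 0 := by positivity
  have hrp : HasDerivAt (fun v : ℝ => (1 + v) ^ β) (β * (1 + u) ^ (β - 1)) u := by
    have := (HasDerivAt.const_add 1 (hasDerivAt_id u)).rpow_const (p := β) (Or.inl h1)
    simpa using this
  have hsum : HasDerivAt (fun v : ℝ => ∑ j ∈ Finset.range (m + 2), bc β j * v ^ j)
      (∑ j ∈ Finset.range (m + 2), bc β j * (j * u ^ (j - 1))) u := by
    apply HasDerivAt.fun_sum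
    intro j _
    exact (hasDerivAt_pow j u).const_mul (bc β j)
  have key : ∑ j ∈ Finset.range (m + 2), bc β j * (j * u ^ (j - 1))
      = β * ∑ j ∈ Finset.range (m + 1), bc (β - 1) j * u ^ j := by
    rw [Finset.sum_range_succ', Finset.mul_sum]
    simp only [Nat.cast_zero, zero_mul, mul_zero, add_zero]
    apply Finset.sum_congr rfl
    intro j _
    have hb := bc_succ' β j
    calc bc β (j + 1) * ((j + 1 : ℕ) * u ^ (j + 1 - 1))
        = ((j : ℝ) + 1) * bc β (j + 1) * u ^ j := by push_cast; ring
      _ = β * bc (β - 1) j * u ^ j := by rw [hb]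
      _ = β * (bc (β - 1) j * u ^ j) := by ring
  have H := hrp.sub hsum
  rw [key] at H
  have : HasDerivAt (fun v : ℝ => (1 + v) ^ β - ∑ j ∈ Finset.range (m + 2), bc β j * v ^ j)
      (β * Rm (β - 1) m u) u := by
    rw [Rm, mul_sub]
    exact H
  exact this

lemma abs_le_of_hasDeriv (f g f' g' : ℝ → ℝ) (hf0 : f 0 = 0) (hg0 : g 0 = 0)
    (hdf : ∀ u ∈ Set.Ici (0:ℝ), HasDerivAt f (f' u) u)
    (hdg : ∀ u ∈ Set.Ici (0:ℝ), HasDerivAt g (g' u) u)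
    (hb : ∀ u ∈ Set.Ici (0:ℝ), |f' u| ≤ g' u) :
    ∀ u, 0 ≤ u → |f u| ≤ g u := by
  have mono : ∀ (F F' : ℝ → ℝ), (∀ u ∈ Set.Ici (0:ℝ), HasDerivAt F (F' u) u) →
      (∀ u ∈ Set.Ici (0:ℝ), 0 ≤ F' u) → ∀ u, 0 ≤ u → F 0 ≤ F u := by
    intro F F' hd hpos u hu
    have hm := monotoneOn_of_deriv_nonneg (convex_Ici (0:ℝ))
      (fun v hv => (hd v hv).continuousAt.continuousWithinAt)
      (fun v hv => (hd v (interior_subset hv)).differentiableAt.differentiableWithinAt)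
      (fun v hv => by rw [(hd v (interior_subset hv)).deriv]; exact hpos v (interior_subset hv))
    exact hm Set.self_mem_Ici hu hu
  intro u hu
  have h1 : g 0 - f 0 ≤ g u - f u := by
    refine mono (fun v => g v - f v) (fun v => g' v - f' v)
      (fun v hv => (hdg v hv).sub (hdf v hv)) (fun v hv => ?_) u hu
    have := abs_le.1 (hb v hv); show (0:ℝ) ≤ g' v - f' v; linarith
  have h2 : g 0 + f 0 ≤ g u + f u := by
    refine mono (fun v => g v + f v) (fun v => g' v + f' v)
      (fun v hv => (hdg v hv).add (hdf v hv)) (fun v hv => ?_) u hu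
    have := abs_le.1 (hb v hv); show (0:ℝ) ≤ g' v + f' v; linarith
  rw [abs_le]; constructor <;> simp only [hf0, hg0] at h1 h2 <;> linarith

lemma Rm_bound : ∀ (m : ℕ) (β : ℝ), β ≤ m + 1 → ∀ u, 0 ≤ u → |Rm β m u| ≤ |bc β (m + 1)| * u ^ (m + 1) := by
  intro m
  induction m with
  | zero =>
    intro β hβ u hu
    refine abs_le_of_hasDeriv (Rm β 0) (fun u => |bc β 1| * u ^ 1)
      (fun u => β * (1 + u) ^ (β - 1)) (fun u => |bc β 1| * (1 * u ^ 0))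
      (Rm_zero β 0) (by simp) (fun v hv => Rm_hasDeriv0 β v hv)
      (fun v hv => by simpa using (hasDerivAt_pow 1 v).const_mul (|bc β 1|)) (fun v hv => ?_) u hu
    have hv0 : (0:ℝ) ≤ v := hv
    have h1 : (0:ℝ) < 1 + v := by linarith
    have hle : (1 + v) ^ (β - 1) ≤ 1 :=
      Real.rpow_le_one_of_one_le_of_nonpos (by linarith) (by norm_num at hβ ⊢; linarith)
    have hpos : (0:ℝ) ≤ (1 + v) ^ (β - 1) := Real.rpow_nonneg (le_of_lt h1) _
    rw [abs_mul, abs_of_nonneg hpos, bc_one]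
    calc |β| * (1 + v) ^ (β - 1) ≤ |β| * 1 := by
          exact mul_le_mul_of_nonneg_left hle (abs_nonneg β)
      _ = |β| * (1 * v ^ 0) := by simp
  | succ m ih =>
    intro β hβ u hu
    refine abs_le_of_hasDeriv (Rm β (m + 1)) (fun u => |bc β (m + 2)| * u ^ (m + 2))
      (fun u => β * Rm (β - 1) m u) (fun u => |bc β (m + 2)| * ((m + 2) * u ^ (m + 1)))
      (Rm_zero β (m + 1)) (by simp) (fun v hv => Rm_hasDeriv β m v hv)
      (fun v hv => by simpa using (hasDerivAt_pow (m + 2) v).const_mul (|bc β (m + 2)|))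
      (fun v hv => ?_) u hu
    have hv0 : (0:ℝ) ≤ v := hv
    have hIH := ih (β - 1) (by push_cast at hβ ⊢; linarith) v hv0
    have hsucc := bc_succ' β (m + 1)
    calc |β * Rm (β - 1) m v| = |β| * |Rm (β - 1) m v| := abs_mul _ _
      _ ≤ |β| * (|bc (β - 1) (m + 1)| * v ^ (m + 1)) :=
          mul_le_mul_of_nonneg_left hIH (abs_nonneg β)
      _ = |β * bc (β - 1) (m + 1)| * v ^ (m + 1) := by rw [abs_mul]; ring
      _ = |((m + 1 : ℕ) + 1 : ℝ) * bc β (m + 1 + 1)| * v ^ (m + 1) := by rw [← hsucc]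
      _ = |bc β (m + 2)| * ((m + 2) * v ^ (m + 1)) := by
          rw [abs_mul, abs_of_nonneg (show (0:ℝ) ≤ ((m + 1 : ℕ) + 1 : ℝ) by positivity)]
          push_cast
          ring
lemma bc_succ (β : ℝ) (m : ℕ) : bc β (m + 1) = bc β m * (β - m) / (m + 1) := by
  have hf : (m.factorial : ℝ) ≠ 0 := by exact_mod_cast Nat.factorial_ne_zero m
  have hm : ((m : ℝ) + 1) ≠ 0 := by positivity
  rw [bc, bc, Finset.prod_range_succ, Nat.factorial_succ, div_mul_eq_mul_div, div_div]
  push_cast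
  ring

lemma bc_ne_zero (β : ℝ) (hβ : ∀ z : ℤ, β ≠ z) (m : ℕ) : bc β m ≠ 0 := by
  rw [bc, div_ne_zero_iff]
  constructor
  · exact Finset.prod_ne_zero_iff.2 fun i _ => sub_ne_zero.2 (hβ i)
  · exact_mod_cast Nat.factorial_ne_zero m

lemma bc_pos (β : ℝ) (m : ℕ) (h : ∀ i : ℕ, i < m → (i : ℝ) < β) : 0 < bc β m := by
  apply div_pos
  · exact Finset.prod_pos fun i hi => sub_pos.2 (h i (Finset.mem_range.1 hi))
  · exact_mod_cast Nat.factorial_pos m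




lemma cheb_sorted : ∀ (p : ℕ) (β : ℝ), (∀ z : ℤ, β ≠ z) →
    ∀ (x : Fin p → ℝ), (∀ j, 0 < x j) → Function.Injective x →
    ∀ (c : Fin p → ℝ) (s : Fin p → ℝ), (∀ i, 0 < s i) → StrictMono s →
    (∀ i, ∑ j, c j * (1 + s i * x j) ^ β = 0) → c = 0 := by
  intro p
  induction p with
  | zero => intro β _ x _ _ c s _ _ _; funext i; exact i.elim0
  | succ p ih =>
    intro β hβ x hxpos hxinj c s hspos hsmono hzero
    have hβ0 : β ≠ 0 := fun h => hβ 0 (by simp [h])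
    set L := Fin.last p with hL
    have hbase : ∀ (u : ℝ), 0 < u → ∀ j : Fin (p + 1), (0:ℝ) < 1 + u * x j := by
      intro u hu j; have := mul_pos hu (hxpos j); linarith
    set g : ℝ → ℝ := fun u => ∑ j, c j * ((1 + u * x j) ^ β * (1 + u * x L) ^ (-β)) with hgdef
    set D : ℝ → ℝ := fun u =>
      ∑ j, (c j * ((x j - x L) * (1 + u * x j) ^ (β - 1))) * (β * (1 + u * x L) ^ (-β - 1))
      with hDdef
    have hg : ∀ u, 0 < u → HasDerivAt g (D u) u := by
      intro u hu
      apply HasDerivAt.fun_sum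
      intro j _
      have haj : (0:ℝ) < 1 + u * x j := hbase u hu j
      have hal : (0:ℝ) < 1 + u * x L := hbase u hu L
      have h1 : HasDerivAt (fun v : ℝ => 1 + v * x j) (x j) u := by
        simpa using ((hasDerivAt_id u).mul_const (x j)).const_add 1
      have h1' : HasDerivAt (fun v : ℝ => 1 + v * x L) (x L) u := by
        simpa using ((hasDerivAt_id u).mul_const (x L)).const_add 1
      have h2 : HasDerivAt (fun v : ℝ => (1 + v * x j) ^ β)
          (β * (1 + u * x j) ^ (β - 1) * x j) u := by
        have h := h1.rpow_const (p := β) (Or.inl (ne_of_gt haj))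
        convert h using 1; ring
      have h3 : HasDerivAt (fun v : ℝ => (1 + v * x L) ^ (-β))
          (-β * (1 + u * x L) ^ (-β - 1) * x L) u := by
        have h := h1'.rpow_const (p := -β) (Or.inl (ne_of_gt hal))
        convert h using 1; ring
      have h4 := (h2.mul h3).const_mul (c j)
      refine h4.congr_deriv ?_
      have e1 : (1 + u * x L) ^ (-β) = (1 + u * x L) ^ (-β - 1) * (1 + u * x L) := by
        rw [← Real.rpow_add_one (ne_of_gt hal)]; congr 1; ring
      have e2 : (1 + u * x j) ^ β = (1 + u * x j) ^ (β - 1) * (1 + u * x j) := by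
        rw [← Real.rpow_add_one (ne_of_gt haj)]; congr 1; ring
      rw [e1, e2]
      ring
    have gz : ∀ i, g (s i) = 0 := by
      intro i
      have : g (s i) = (∑ j, c j * (1 + s i * x j) ^ β) * (1 + s i * x L) ^ (-β) := by
        rw [hgdef, Finset.sum_mul]
        exact Finset.sum_congr rfl fun j _ => by ring
      rw [this, hzero i, zero_mul]
    have rolle : ∀ i : Fin p, ∃ ξ, ξ ∈ Set.Ioo (s i.castSucc) (s i.succ) ∧ D ξ = 0 := by
      intro i
      have hab : s i.castSucc < s i.succ := hsmono (Fin.castSucc_lt_succ (i := i))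
      have hcont : ContinuousOn g (Set.Icc (s i.castSucc) (s i.succ)) := by
        intro v hv
        have hvpos : 0 < v := lt_of_lt_of_le (hspos _) hv.1
        exact (hg v hvpos).continuousAt.continuousWithinAt
      have hIoo : ∀ v ∈ Set.Ioo (s i.castSucc) (s i.succ), HasDerivAt g (D v) v :=
        fun v hv => hg v (lt_trans (hspos _) hv.1)
      exact exists_hasDerivAt_eq_zero hab hcont (by rw [gz, gz]) hIoo
    choose ξ hmem hDz using rolle
    have hξpos : ∀ i, 0 < ξ i := fun i => lt_trans (hspos _) (hmem i).1
    have hsum0 : ∀ i : Fin p, ∑ j : Fin p,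
        (c j.castSucc * (x j.castSucc - x L)) * (1 + ξ i * (x ∘ Fin.castSucc) j) ^ (β - 1) = 0 := by
      intro i
      have hfac : D (ξ i) = (∑ j : Fin (p+1), c j * ((x j - x L) * (1 + ξ i * x j) ^ (β - 1)))
          * (β * (1 + ξ i * x L) ^ (-β - 1)) := by
        rw [hDdef, Finset.sum_mul]
      have hbne : β * (1 + ξ i * x L) ^ (-β - 1) ≠ 0 :=
        mul_ne_zero hβ0 (ne_of_gt (Real.rpow_pos_of_pos (hbase _ (hξpos i) L) _))
      have hD := hDz i
      rw [hfac] at hD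
      have hsum : ∑ j : Fin (p+1), c j * ((x j - x L) * (1 + ξ i * x j) ^ (β - 1)) = 0 :=
        (mul_eq_zero.1 hD).resolve_right hbne
      rw [Fin.sum_univ_castSucc] at hsum
      simp only [← hL, sub_self, zero_mul, mul_zero, add_zero] at hsum
      rw [← hsum]
      exact Finset.sum_congr rfl fun j _ => by simp [Function.comp]; ring
    have hξmono : StrictMono ξ := by
      intro i i' hii'
      calc ξ i < s i.succ := (hmem i).2
        _ ≤ s i'.castSucc := hsmono.monotone (by
            rw [Fin.le_def]
            simp only [Fin.val_succ, Fin.coe_castSucc]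
            exact hii')
        _ < ξ i' := (hmem i').1
    have hβ' : ∀ z : ℤ, β - 1 ≠ z := by
      intro z h
      exact hβ (z + 1) (by push_cast; linarith)
    have hd := ih (β - 1) hβ' (x ∘ Fin.castSucc) (fun j => hxpos _)
      (hxinj.comp (Fin.castSucc_injective p))
      (fun j => c j.castSucc * (x j.castSucc - x L)) ξ hξpos hξmono hsum0
    have hc : ∀ j : Fin p, c j.castSucc = 0 := by
      intro j
      have hj := congrFun hd j
      simp only [Pi.zero_apply] at hj
      have hxne : x j.castSucc - x L ≠ 0 := by
        refine sub_ne_zero.2 fun h => ?_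
        have := hxinj h
        exact absurd this (Fin.ne_of_lt (Fin.castSucc_lt_last j))
      exact (mul_eq_zero.1 hj).resolve_right hxne
    have h0 := hzero 0
    rw [Fin.sum_univ_castSucc] at h0
    rw [Finset.sum_eq_zero (fun j _ => by rw [hc j, zero_mul])] at h0
    have hne : (1 + s 0 * x L) ^ β ≠ 0 :=
      ne_of_gt (Real.rpow_pos_of_pos (hbase _ (hspos 0) L) _)
    have hcL : c L = 0 := by
      rw [zero_add] at h0
      exact (mul_eq_zero.1 h0).resolve_right hne
    funext j
    exact Fin.lastCases hcL hc j

lemma cheb (p : ℕ) (β : ℝ) (hβ : ∀ z : ℤ, β ≠ z)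
    (x : Fin p → ℝ) (hxpos : ∀ j, 0 < x j) (hxinj : Function.Injective x)
    (c : Fin p → ℝ) (s : Fin p → ℝ) (hspos : ∀ i, 0 < s i) (hsinj : Function.Injective s)
    (hzero : ∀ i, ∑ j, c j * (1 + s i * x j) ^ β = 0) : c = 0 := by
  have hmono : StrictMono (s ∘ Tuple.sort s) :=
    (Tuple.monotone_sort s).strictMono_of_injective (hsinj.comp (Tuple.sort s).injective)
  exact cheb_sorted p β hβ x hxpos hxinj c (s ∘ Tuple.sort s)
    (fun i => hspos _) hmono (fun i => hzero _)




variable {q : ℕ}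

lemma quad_expand (M : Matrix (Fin q) (Fin q) ℝ) (v : Fin q → ℝ) :
    star v ⬝ᵥ (M *ᵥ v) = ∑ i, ∑ j, v i * M i j * v j := by
  simp only [dotProduct, Matrix.mulVec, Pi.star_apply, star_trivial, Finset.mul_sum]
  exact Finset.sum_congr rfl fun i _ => Finset.sum_congr rfl fun j _ => by ring

lemma herm_entry {M : Matrix (Fin q) (Fin q) ℝ} (hM : M.IsHermitian) (i j : Fin q) :
    M j i = M i j := by
  have := congrFun (congrFun hM i) j
  simpa using this

lemma schur {A C : Matrix (Fin q) (Fin q) ℝ} (hA : A.PosSemidef) (hC : C.PosSemidef) :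
    (Matrix.of fun i j => A i j * C i j).PosSemidef := by
  obtain ⟨B, hB⟩ : ∃ B : Matrix (Fin q) (Fin q) ℝ, A = Bᴴ * B := by
    open scoped MatrixOrder in
    obtain ⟨B, hB⟩ := CStarAlgebra.nonneg_iff_eq_star_mul_self.mp hA.nonneg
    exact ⟨B, hB⟩
  have hAij : ∀ i j, A i j = ∑ l, B l i * B l j := by
    intro i j
    rw [hB]
    simp [Matrix.mul_apply, Matrix.conjTranspose_apply]
  refine Matrix.PosSemidef.of_dotProduct_mulVec_nonneg ?_ ?_
  · have h1 := hA.1; have h2 := hC.1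
    ext i j
    simp only [Matrix.conjTranspose_apply, Matrix.of_apply, star_trivial]
    rw [herm_entry h1, herm_entry h2]
  · intro v
    rw [quad_expand]
    have key : ∀ i j, v i * (Matrix.of fun i j => A i j * C i j) i j * v j
        = ∑ l, (B l i * v i) * C i j * (B l j * v j) := by
      intro i j
      simp only [Matrix.of_apply]
      rw [hAij i j, Finset.sum_mul, Finset.mul_sum, Finset.sum_mul]
      exact Finset.sum_congr rfl fun l _ => by ring
    calc ∑ i, ∑ j, v i * (Matrix.of fun i j => A i j * C i j) i j * v j
        = ∑ i, ∑ j, ∑ l, (B l i * v i) * C i j * (B l j * v j) := by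
          exact Finset.sum_congr rfl fun i _ => Finset.sum_congr rfl fun j _ => key i j
      _ = ∑ i, ∑ l, ∑ j, (B l i * v i) * C i j * (B l j * v j) := by
          exact Finset.sum_congr rfl fun i _ => Finset.sum_comm
      _ = ∑ l, ∑ i, ∑ j, (B l i * v i) * C i j * (B l j * v j) := Finset.sum_comm
      _ = ∑ l, star (fun i => B l i * v i) ⬝ᵥ (C *ᵥ fun i => B l i * v i) := by
          exact Finset.sum_congr rfl fun l _ => (quad_expand C _).symm
      _ ≥ 0 := Finset.sum_nonneg fun l _ => hC.dotProduct_mulVec_nonneg _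

lemma psd_of_quad (M : Matrix (Fin q) (Fin q) ℝ) (hherm : M.IsHermitian)
    (h : ∀ v : Fin q → ℝ, 0 ≤ ∑ i, ∑ j, v i * M i j * v j) : M.PosSemidef :=
  Matrix.PosSemidef.of_dotProduct_mulVec_nonneg hherm fun v => by rw [quad_expand]; exact h v

lemma entry_pow_psd {B : Matrix (Fin q) (Fin q) ℝ} (hB : B.PosSemidef) (m : ℕ) :
    (Matrix.of fun i j => B i j ^ m).PosSemidef := by
  induction m with
  | zero =>
    refine psd_of_quad _ ?_ ?_
    · ext i j; simp [Matrix.conjTranspose_apply]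
    · intro v
      have : ∑ i, ∑ j, v i * (Matrix.of fun i j : Fin q => B i j ^ 0) i j * v j
          = (∑ i, v i) * (∑ i, v i) := by
        rw [Finset.sum_mul]
        refine Finset.sum_congr rfl fun i _ => ?_
        rw [Finset.mul_sum]
        exact Finset.sum_congr rfl fun j _ => by simp [Matrix.of_apply]
      rw [this]
      exact mul_self_nonneg _
  | succ m ih =>
    have h := schur ih hB
    convert h using 2
    ext i j
    simp [Matrix.of_apply, pow_succ]

lemma posdef_quad_pos {M : Matrix (Fin q) (Fin q) ℝ} (hM : M.PosDef) (v : Fin q → ℝ)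
    (hv : v ≠ 0) : 0 < ∑ i, ∑ j, v i * M i j * v j := by
  rw [← quad_expand]; exact hM.dotProduct_mulVec_pos hv

lemma posdef_of_quad (M : Matrix (Fin q) (Fin q) ℝ) (hherm : M.IsHermitian)
    (h : ∀ v : Fin q → ℝ, v ≠ 0 → 0 < ∑ i, ∑ j, v i * M i j * v j) : M.PosDef :=
  Matrix.PosDef.of_dotProduct_mulVec_pos hherm fun v hv => by rw [quad_expand]; exact h v hv

lemma posdef_stable {M : Matrix (Fin q) (Fin q) ℝ} (hM : M.PosDef) :
    ∃ δ : ℝ, 0 < δ ∧ ∀ M' : Matrix (Fin q) (Fin q) ℝ, M'.IsHermitian →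
      (∀ i j, |M' i j - M i j| < δ) → M'.PosDef := by
  rcases Nat.eq_zero_or_pos q with hq | hq
  · refine ⟨1, one_pos, fun M' hherm _ => ⟨hherm, fun v hv => ?_⟩⟩
    exact absurd (Finsupp.ext fun i : Fin q => absurd (i.2.trans_eq hq) (Nat.not_lt_zero _)) hv
  haveI : Nonempty (Fin q) := ⟨⟨0, hq⟩⟩
  set f : (Fin q → ℝ) → ℝ := fun v => ∑ i, ∑ j, v i * M i j * v j with hfdef
  have hfc : Continuous f := by
    apply continuous_finset_sum
    intro i _
    apply continuous_finset_sum
    intro j _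
    exact ((continuous_apply i).mul continuous_const).mul (continuous_apply j)
  have hSne : (Metric.sphere (0 : Fin q → ℝ) 1).Nonempty := by
    refine ⟨fun _ => 1, ?_⟩
    simp [Metric.mem_sphere, dist_zero_right]
  obtain ⟨v₀, hv₀S, hmin⟩ :=
    (isCompact_sphere (0 : Fin q → ℝ) 1).exists_isMinOn hSne hfc.continuousOn
  have hv₀n : ‖v₀‖ = 1 := by simpa [dist_zero_right] using hv₀S
  have hv₀ : v₀ ≠ 0 := by intro h; rw [h] at hv₀n; simp at hv₀n
  set c := f v₀ with hcdef
  have hc : 0 < c := posdef_quad_pos hM v₀ hv₀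
  set δ := c / ((q : ℝ) ^ 2 + 1) with hδdef
  have hδpos : 0 < δ := by positivity
  refine ⟨δ, hδpos, fun M' hherm hclose => ?_⟩
  refine posdef_of_quad _ hherm fun v hv => ?_
  have hvn : ‖v‖ ≠ 0 := norm_ne_zero_iff.2 hv
  set u : Fin q → ℝ := ‖v‖⁻¹ • v with hudef
  have huS : u ∈ Metric.sphere (0 : Fin q → ℝ) 1 := by
    simp only [Metric.mem_sphere, dist_zero_right, hudef, norm_smul, norm_inv, norm_norm]
    field_simp
  have hvu : v = ‖v‖ • u := by
    rw [hudef, smul_smul, mul_inv_cancel₀ hvn, one_smul]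
  have hub : ∀ i, |u i| ≤ 1 := by
    intro i
    have := norm_le_pi_norm u i
    simpa [dist_zero_right, Metric.mem_sphere] using this.trans_eq (by
      simpa [dist_zero_right] using huS)
  have hsplit : ∑ i, ∑ j, u i * M' i j * u j
      = f u + ∑ i, ∑ j, u i * (M' i j - M i j) * u j := by
    rw [hfdef]
    rw [← Finset.sum_add_distrib]
    refine Finset.sum_congr rfl fun i _ => ?_
    rw [← Finset.sum_add_distrib]
    exact Finset.sum_congr rfl fun j _ => by ring
  have hbound : |∑ i, ∑ j, u i * (M' i j - M i j) * u j| ≤ (q : ℝ) ^ 2 * δ := by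
    calc |∑ i, ∑ j, u i * (M' i j - M i j) * u j|
        ≤ ∑ i, |∑ j, u i * (M' i j - M i j) * u j| := Finset.abs_sum_le_sum_abs _ _
      _ ≤ ∑ i, ∑ j, |u i * (M' i j - M i j) * u j| :=
          Finset.sum_le_sum fun i _ => Finset.abs_sum_le_sum_abs _ _
      _ ≤ ∑ i : Fin q, ∑ j : Fin q, δ := by
          refine Finset.sum_le_sum fun i _ => Finset.sum_le_sum fun j _ => ?_
          rw [abs_mul, abs_mul]
          have h1 := hub i
          have h2 := hub j
          have h3 := (hclose i j).le
          have t1 : |u i| * |M' i j - M i j| ≤ |M' i j - M i j| :=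
            mul_le_of_le_one_left (abs_nonneg _) h1
          calc |u i| * |M' i j - M i j| * |u j|
              ≤ |M' i j - M i j| * |u j| := mul_le_mul_of_nonneg_right t1 (abs_nonneg _)
            _ ≤ |M' i j - M i j| := mul_le_of_le_one_right (abs_nonneg _) h2
            _ ≤ δ := h3
      _ = (q : ℝ) ^ 2 * δ := by
          simp [Finset.sum_const, Finset.card_univ]
          ring
  have hfu : c ≤ f u := hmin huS
  have hquadu : 0 < ∑ i, ∑ j, u i * M' i j * u j := by
    rw [hsplit]
    have h5 : (q:ℝ)^2 * δ < c := by
      have hq1 : (0:ℝ) < (q:ℝ)^2 + 1 := by positivity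
      rw [hδdef, mul_comm, div_mul_eq_mul_div, div_lt_iff₀ hq1]
      nlinarith
    have := abs_le.1 hbound
    linarith
  have hquadv : ∑ i, ∑ j, v i * M' i j * v j = ‖v‖ ^ 2 * ∑ i, ∑ j, u i * M' i j * u j := by
    conv_lhs => rw [hvu]
    rw [Finset.mul_sum]
    refine Finset.sum_congr rfl fun i _ => ?_
    rw [Finset.mul_sum]
    refine Finset.sum_congr rfl fun j _ => ?_
    simp only [Pi.smul_apply, smul_eq_mul]
    ring
  rw [hquadv]
  have : (0:ℝ) < ‖v‖ ^ 2 := by positivity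
  exact mul_pos this hquadu

lemma vand_solve (p : ℕ) (z : Fin p → ℝ) (hz : Function.Injective z) (w : Fin p → ℝ) :
    ∃ v : Fin p → ℝ, ∀ m : Fin p, ∑ j, v j * z j ^ (m : ℕ) = w m := by
  have hdet' : ((Matrix.vandermonde z)ᵀ).det ≠ 0 := by
    rw [Matrix.det_transpose]
    exact Matrix.det_vandermonde_ne_zero_iff.mpr hz
  set B := (Matrix.vandermonde z)ᵀ with hB
  have hunit : IsUnit B.det := isUnit_iff_ne_zero.2 hdet'
  refine ⟨B⁻¹ *ᵥ w, fun m => ?_⟩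
  calc ∑ j, (B⁻¹ *ᵥ w) j * z j ^ (m : ℕ) = (B *ᵥ (B⁻¹ *ᵥ w)) m := by
        rw [Matrix.mulVec, dotProduct]
        exact Finset.sum_congr rfl fun j _ => by
          rw [hB]; simp [Matrix.transpose_apply, Matrix.vandermonde]; ring
    _ = w m := by rw [Matrix.mulVec_mulVec, Matrix.mul_nonsing_inv _ hunit, Matrix.one_mulVec]

lemma neg_quad (r : ℕ) (α : ℝ) (hα1 : (r : ℝ) < α) (hα2 : α < r + 1)
    (z : Fin (r + 3) → ℝ) (hzp : ∀ j, 0 < z j) (hzi : Function.Injective z) :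
    ∃ t : ℝ, 0 < t ∧ t ≤ 1 ∧ ∃ v : Fin (r + 3) → ℝ,
      ∑ i, ∑ j, v i * (1 + t * (z i * z j)) ^ α * v j < 0 := by
  obtain ⟨v, hv⟩ := vand_solve (r + 3) z hzi (fun m => if (m : ℕ) = r + 2 then 1 else 0)
  -- powers sums
  have hS : ∀ m : ℕ, m < r + 3 → ∑ j, v j * z j ^ m = if m = r + 2 then 1 else 0 := by
    intro m hm
    have := hv ⟨m, hm⟩
    simpa using this
  -- bound for z
  set Z : ℝ := 1 + ∑ j, |z j| with hZ
  have hZ1 : 1 ≤ Z := by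
    have : 0 ≤ ∑ j, |z j| := Finset.sum_nonneg fun j _ => abs_nonneg _
    linarith
  have hzZ : ∀ j, z j ≤ Z := by
    intro j
    have h1 : z j ≤ |z j| := le_abs_self _
    have h2 : |z j| ≤ ∑ i, |z i| :=
      Finset.single_le_sum (fun i _ => abs_nonneg (z i)) (Finset.mem_univ j)
    linarith
  set W : ℝ := ∑ j, |v j| * z j ^ (r + 3) with hW
  have hWnn : 0 ≤ W :=
    Finset.sum_nonneg fun j _ => mul_nonneg (abs_nonneg _) (pow_nonneg (hzp j).le _)
  set c : ℝ := |bc α (r + 2)| with hc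
  set d : ℝ := |bc α (r + 3)| * W ^ 2 with hd
  have hbcneg : bc α (r + 2) < 0 := by
    have hpos : 0 < bc α (r + 1) := by
      apply bc_pos
      intro i hi
      have : (i : ℝ) ≤ r := by exact_mod_cast Nat.lt_succ_iff.mp hi
      linarith
    have := bc_succ α (r + 1)
    rw [show r + 1 + 1 = r + 2 from rfl] at this
    rw [this]
    apply div_neg_of_neg_of_pos
    · apply mul_neg_of_pos_of_neg hpos
      push_cast
      linarith
    · push_cast; positivity
  have hcpos : 0 < c := by rw [hc]; exact abs_pos.2 (ne_of_lt hbcneg)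
  have hdnn : 0 ≤ d := by rw [hd]; positivity
  have hZpos : 0 < Z := lt_of_lt_of_le one_pos hZ1
  set t : ℝ := min (min 1 (1 / Z ^ 2)) (c / (2 * (d + 1))) with ht
  have htpos : 0 < t := by
    apply lt_min
    · exact lt_min one_pos (div_pos one_pos (pow_pos hZpos 2))
    · exact div_pos hcpos (by linarith)
  have ht1 : t ≤ 1 := le_trans (min_le_left _ _) (min_le_left _ _)
  have htZ : t * Z ^ 2 ≤ 1 := by
    have h1 : t ≤ 1 / Z ^ 2 := le_trans (min_le_left _ _) (min_le_right _ _)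
    have hZ2 : (0:ℝ) < Z ^ 2 := by positivity
    calc t * Z ^ 2 ≤ (1 / Z ^ 2) * Z ^ 2 := mul_le_mul_of_nonneg_right h1 hZ2.le
      _ = 1 := one_div_mul_cancel (ne_of_gt hZ2)
  have htd : t * d < c := by
    have h1 : t ≤ c / (2 * (d + 1)) := min_le_right _ _
    have h2 : 0 < 2 * (d + 1) := by linarith
    have h3 : t * d ≤ (c / (2 * (d + 1))) * d := by
      apply mul_le_mul_of_nonneg_right h1 hdnn
    have h4 : (c / (2 * (d + 1))) * d < c := by
      rw [div_mul_eq_mul_div, div_lt_iff₀ h2]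
      nlinarith
    linarith
  refine ⟨t, htpos, ht1, v, ?_⟩
  -- u bounds
  have hu01 : ∀ i j : Fin (r + 3), 0 ≤ t * (z i * z j) ∧ t * (z i * z j) ≤ 1 := by
    intro i j
    constructor
    · exact mul_nonneg htpos.le (mul_pos (hzp i) (hzp j)).le
    · have hzz : z i * z j ≤ Z ^ 2 := by
        have := hzp i; have := hzp j
        have h1 := hzZ i; have h2 := hzZ j
        nlinarith
      calc t * (z i * z j) ≤ t * Z ^ 2 := mul_le_mul_of_nonneg_left hzz htpos.le
        _ ≤ 1 := htZ
  -- expansion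
  have hexp : ∀ u : ℝ, (1 + u) ^ α
      = (∑ m ∈ Finset.range (r + 3), bc α m * u ^ m) + Rm α (r + 2) u := by
    intro u; rw [Rm]; ring
  have hsplit : ∑ i, ∑ j, v i * (1 + t * (z i * z j)) ^ α * v j
      = (∑ i, ∑ j, v i * (∑ m ∈ Finset.range (r + 3), bc α m * (t * (z i * z j)) ^ m) * v j)
        + ∑ i, ∑ j, v i * Rm α (r + 2) (t * (z i * z j)) * v j := by
    rw [← Finset.sum_add_distrib]
    refine Finset.sum_congr rfl fun i _ => ?_
    rw [← Finset.sum_add_distrib]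
    refine Finset.sum_congr rfl fun j _ => ?_
    rw [hexp (t * (z i * z j))]
    ring
  have hmain : ∑ i, ∑ j, v i * (∑ m ∈ Finset.range (r + 3), bc α m * (t * (z i * z j)) ^ m) * v j
      = ∑ m ∈ Finset.range (r + 3),
          bc α m * t ^ m * ((∑ i, v i * z i ^ m) * (∑ j, v j * z j ^ m)) := by
    have step1 : ∀ i : Fin (r + 3), ∑ j, v i * (∑ m ∈ Finset.range (r + 3),
        bc α m * (t * (z i * z j)) ^ m) * v j
        = ∑ m ∈ Finset.range (r + 3), ∑ j, bc α m * t ^ m * ((v i * z i ^ m) * (v j * z j ^ m)) := by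
      intro i
      rw [Finset.sum_comm]
      refine Finset.sum_congr rfl fun j _ => ?_
      rw [Finset.mul_sum, Finset.sum_mul]
      refine Finset.sum_congr rfl fun m _ => ?_
      rw [mul_pow, mul_pow]
      ring
    calc ∑ i, ∑ j, v i * (∑ m ∈ Finset.range (r + 3), bc α m * (t * (z i * z j)) ^ m) * v j
        = ∑ i, ∑ m ∈ Finset.range (r + 3), ∑ j,
            bc α m * t ^ m * ((v i * z i ^ m) * (v j * z j ^ m)) := by
          exact Finset.sum_congr rfl fun i _ => step1 i
      _ = ∑ m ∈ Finset.range (r + 3), ∑ i, ∑ j,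
            bc α m * t ^ m * ((v i * z i ^ m) * (v j * z j ^ m)) := Finset.sum_comm
      _ = ∑ m ∈ Finset.range (r + 3),
            bc α m * t ^ m * ((∑ i, v i * z i ^ m) * (∑ j, v j * z j ^ m)) := by
          refine Finset.sum_congr rfl fun m _ => ?_
          rw [Finset.sum_mul_sum, Finset.mul_sum]
          refine Finset.sum_congr rfl fun i _ => ?_
          rw [Finset.mul_sum]
  have hmainval : ∑ m ∈ Finset.range (r + 3),
      bc α m * t ^ m * ((∑ i, v i * z i ^ m) * (∑ j, v j * z j ^ m))
      = bc α (r + 2) * t ^ (r + 2) := by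
    rw [Finset.sum_eq_single (r + 2)]
    · rw [hS (r + 2) (by omega)]
      simp
    · intro m hm hne
      rw [hS m (Finset.mem_range.1 hm)]
      rw [if_neg hne]
      ring
    · intro h
      exact absurd (Finset.mem_range.2 (by omega)) h
  -- remainder bound
  have hrem : |∑ i, ∑ j, v i * Rm α (r + 2) (t * (z i * z j)) * v j| ≤ d * t ^ (r + 3) := by
    have hbd : ∀ i j : Fin (r + 3), |v i * Rm α (r + 2) (t * (z i * z j)) * v j|
        ≤ |bc α (r + 3)| * t ^ (r + 3) * ((|v i| * z i ^ (r + 3)) * (|v j| * z j ^ (r + 3))) := by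
      intro i j
      obtain ⟨hu0, hu1⟩ := hu01 i j
      have hRb := Rm_bound (r + 2) α (by push_cast; linarith) (t * (z i * z j)) hu0
      rw [abs_mul, abs_mul]
      have e : |bc α (r + 3)| * t ^ (r + 3) * ((|v i| * z i ^ (r + 3)) * (|v j| * z j ^ (r + 3)))
          = |v i| * (|bc α (r + 3)| * (t * (z i * z j)) ^ (r + 3)) * |v j| := by
        rw [mul_pow, mul_pow]
        ring
      rw [e]
      have h1 : |Rm α (r + 2) (t * (z i * z j))| ≤ |bc α (r + 3)| * (t * (z i * z j)) ^ (r + 3) := by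
        rw [show r + 2 + 1 = r + 3 from rfl] at hRb
        exact hRb
      have h2 : 0 ≤ |v i| := abs_nonneg _
      have h3 : 0 ≤ |v j| := abs_nonneg _
      apply mul_le_mul_of_nonneg_right _ h3
      exact mul_le_mul_of_nonneg_left h1 h2
    calc |∑ i, ∑ j, v i * Rm α (r + 2) (t * (z i * z j)) * v j|
        ≤ ∑ i, |∑ j, v i * Rm α (r + 2) (t * (z i * z j)) * v j| := Finset.abs_sum_le_sum_abs _ _
      _ ≤ ∑ i, ∑ j, |v i * Rm α (r + 2) (t * (z i * z j)) * v j| :=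
          Finset.sum_le_sum fun i _ => Finset.abs_sum_le_sum_abs _ _
      _ ≤ ∑ i, ∑ j, |bc α (r + 3)| * t ^ (r + 3)
            * ((|v i| * z i ^ (r + 3)) * (|v j| * z j ^ (r + 3))) :=
          Finset.sum_le_sum fun i _ => Finset.sum_le_sum fun j _ => hbd i j
      _ = |bc α (r + 3)| * t ^ (r + 3) * (W * W) := by
          rw [hW, Finset.sum_mul_sum]
          rw [Finset.mul_sum]
          refine Finset.sum_congr rfl fun i _ => ?_
          rw [Finset.mul_sum]
      _ = d * t ^ (r + 3) := by rw [hd]; ring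
  rw [hsplit, hmain, hmainval]
  have habs := abs_le.1 hrem
  have hpow : t ^ (r + 3) = t * t ^ (r + 2) := by
    rw [show r + 3 = (r + 2) + 1 from rfl, pow_succ]
    ring
  have htp : 0 < t ^ (r + 2) := pow_pos htpos _
  have hc' : bc α (r + 2) = -c := by
    rw [hc, abs_of_neg hbcneg]; ring
  rw [hc']
  have : d * t ^ (r + 3) = (d * t) * t ^ (r + 2) := by rw [hpow]; ring
  nlinarith [habs.2, mul_pos (sub_pos.2 htd) htp, this]

theorem core_notPSD (r : ℕ) (α : ℝ) (hα1 : (r : ℝ) < α) (hα2 : α < r + 1)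
    (z : Fin (r + 3) → ℝ) (hzp : ∀ j, 0 < z j) (hzi : Function.Injective z) :
    ¬ (Matrix.of fun i j => (1 + z i * z j) ^ α : Matrix (Fin (r + 3)) (Fin (r + 3)) ℝ).PosSemidef := by
  intro hPSD
  have hni : ∀ w : ℤ, α ≠ w := by
    intro w hw
    rw [hw] at hα1 hα2
    have h1 : (r : ℤ) < w := by exact_mod_cast hα1
    have h2 : w < (r : ℤ) + 1 := by exact_mod_cast hα2
    omega
  set N : ℝ → Matrix (Fin (r + 3)) (Fin (r + 3)) ℝ :=
    fun t => Matrix.of fun i j => (1 + t * (z i * z j)) ^ α with hN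
  have hNapp : ∀ t i j, N t i j = (1 + t * (z i * z j)) ^ α := fun t i j => rfl
  have hherm : ∀ t, (N t).IsHermitian := by
    intro t
    ext i j
    simp only [Matrix.conjTranspose_apply, hNapp, star_trivial]
    rw [mul_comm (z j) (z i)]
  have hinj : ∀ t, 0 < t → ∀ cc : Fin (r + 3) → ℝ, ((N t) *ᵥ cc = 0) → cc = 0 := by
    intro t htt cc hcc
    refine cheb (r + 3) α hni (fun j => t * z j) (fun j => mul_pos htt (hzp j))
      (fun a b hab => hzi (mul_left_cancel₀ (ne_of_gt htt) hab)) cc z hzp hzi fun i => ?_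
    have hrow := congrFun hcc i
    simp only [Matrix.mulVec, dotProduct, Pi.zero_apply] at hrow
    rw [← hrow]
    refine Finset.sum_congr rfl fun j _ => ?_
    rw [hNapp, show z i * (t * z j) = t * (z i * z j) by ring]
    ring
  have hPDof : ∀ t, 0 < t → (N t).PosSemidef → (N t).PosDef := by
    intro t htt hps
    refine Matrix.PosDef.of_dotProduct_mulVec_pos (hherm t) fun w hw => ?_
    have h0 : 0 ≤ star w ⬝ᵥ ((N t) *ᵥ w) := hps.dotProduct_mulVec_nonneg w
    rcases eq_or_lt_of_le h0 with heq | hlt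
    · exfalso
      have hmv : (N t) *ᵥ w = 0 := (hps.dotProduct_mulVec_zero_iff w).1 heq.symm
      exact hw (hinj t htt w hmv)
    · exact hlt
  obtain ⟨t₀, ht₀, ht₀1, v, hvneg⟩ := neg_quad r α hα1 hα2 z hzp hzi
  set U := {t : ℝ | 0 < t ∧ (N t).PosDef} with hU
  set V := {t : ℝ | 0 < t ∧ ∃ w : Fin (r + 3) → ℝ, ∑ i, ∑ j, w i * N t i j * w j < 0} with hV
  have hNcont : ∀ (i j : Fin (r + 3)) (t : ℝ), 0 < t → ContinuousAt (fun s => N s i j) t := by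
    intro i j t htt
    have hb : (0:ℝ) < 1 + t * (z i * z j) := by
      have := mul_pos htt (mul_pos (hzp i) (hzp j)); linarith
    have h1 : ContinuousAt (fun s : ℝ => 1 + s * (z i * z j)) t :=
      (continuous_const.add (continuous_id.mul continuous_const)).continuousAt
    have h2 := Real.continuousAt_rpow_const (1 + t * (z i * z j)) α (Or.inl (ne_of_gt hb))
    have h3 : ContinuousAt ((fun x : ℝ => x ^ α) ∘ fun s : ℝ => 1 + s * (z i * z j)) t :=
      ContinuousAt.comp (x := t) (g := fun x : ℝ => x ^ α)
        (f := fun s : ℝ => 1 + s * (z i * z j)) h2 h1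
    exact h3
  have hUopen : IsOpen U := by
    rw [isOpen_iff_mem_nhds]
    rintro t ⟨htt, hPD⟩
    obtain ⟨δ, hδ, hδp⟩ := posdef_stable hPD
    have hev : ∀ᶠ s in nhds t, ∀ i j : Fin (r + 3), |N s i j - N t i j| < δ := by
      rw [Filter.eventually_all]
      intro i
      rw [Filter.eventually_all]
      intro j
      have hball := (hNcont i j t htt).eventually_mem (Metric.ball_mem_nhds (N t i j) hδ)
      refine hball.mono fun s hs => ?_
      rw [Metric.mem_ball, Real.dist_eq] at hs
      exact hs
    have hev2 : ∀ᶠ s in nhds t, 0 < s := eventually_gt_nhds htt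
    have : ∀ᶠ s in nhds t, s ∈ U := by
      filter_upwards [hev, hev2] with s hs hs0
      exact ⟨hs0, hδp (N s) (hherm s) hs⟩
    rwa [Filter.eventually_iff, Set.setOf_mem_eq] at this
  have hVopen : IsOpen V := by
    rw [isOpen_iff_mem_nhds]
    rintro t ⟨htt, w, hw⟩
    have hcont : ContinuousAt (fun s => ∑ i, ∑ j, w i * N s i j * w j) t := by
      apply tendsto_finset_sum
      intro i _
      apply tendsto_finset_sum
      intro j _
      exact ((hNcont i j t htt).const_mul (w i)).mul_const (w j)
    have hev := hcont.eventually_mem (IsOpen.mem_nhds isOpen_Iio hw)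
    have hev2 : ∀ᶠ s in nhds t, 0 < s := eventually_gt_nhds htt
    have : ∀ᶠ s in nhds t, s ∈ V := by
      filter_upwards [hev, hev2] with s hs hs0
      exact ⟨hs0, w, hs⟩
    rwa [Filter.eventually_iff, Set.setOf_mem_eq] at this
  have hsub : Set.Icc t₀ 1 ⊆ U ∪ V := by
    intro t htI
    have htt : 0 < t := lt_of_lt_of_le ht₀ htI.1
    by_cases hps : (N t).PosSemidef
    · exact Or.inl ⟨htt, hPDof t htt hps⟩
    · refine Or.inr ⟨htt, ?_⟩
      by_contra hno
      push_neg at hno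
      exact hps (psd_of_quad _ (hherm t) hno)
  have h1U : (1 : ℝ) ∈ U := by
    refine ⟨one_pos, hPDof 1 one_pos ?_⟩
    have : N 1 = Matrix.of fun i j => (1 + z i * z j) ^ α := by
      ext i j; rw [hNapp]; norm_num
    rwa [this]
  have hUne : (Set.Icc t₀ 1 ∩ U).Nonempty := ⟨1, ⟨ht₀1, le_refl 1⟩, h1U⟩
  have hVne : (Set.Icc t₀ 1 ∩ V).Nonempty := by
    refine ⟨t₀, ⟨le_refl t₀, ht₀1⟩, ht₀, v, ?_⟩
    exact hvneg
  have hdisj : Set.Icc t₀ 1 ∩ (U ∩ V) = ∅ := by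
    rw [Set.eq_empty_iff_forall_notMem]
    rintro t ⟨_, ⟨_, hPD⟩, _, w, hw⟩
    have hwne : w ≠ 0 := by
      rintro rfl
      simp only [Pi.zero_apply, zero_mul, mul_zero, Finset.sum_const_zero] at hw
      exact lt_irrefl 0 hw
    have := posdef_quad_pos hPD w hwne
    linarith
  have := isPreconnected_Icc U V hUopen hVopen hsub hUne hVne
  rw [hdisj] at this
  exact Set.not_nonempty_empty this

lemma bigB_psd (n k : ℕ) (x : Fin n → ℝ) (ε : ℝ) (hε : 0 ≤ ε) :
    (Matrix.of fun i j : Fin n =>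
      (1 + x i * x j) + ε * (if i = j ∧ n - k ≤ (i : ℕ) then 1 else 0)).PosSemidef := by
  set B : Matrix (Fin n) (Fin n) ℝ := Matrix.of fun i j : Fin n =>
      (1 + x i * x j) + ε * (if i = j ∧ n - k ≤ (i : ℕ) then 1 else 0) with hB
  have hBapp : ∀ i j, B i j
      = (1 + x i * x j) + ε * (if i = j ∧ n - k ≤ (i : ℕ) then 1 else 0) := fun i j => rfl
  refine psd_of_quad _ ?_ ?_
  · ext i j
    simp only [Matrix.conjTranspose_apply, hBapp, star_trivial]
    have hcond : (j = i ∧ n - k ≤ (j : ℕ)) ↔ (i = j ∧ n - k ≤ (i : ℕ)) := by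
      constructor <;> rintro ⟨rfl, h⟩ <;> exact ⟨rfl, h⟩
    rw [if_congr hcond rfl rfl, mul_comm (x j) (x i)]
  · intro v
    have hterm : ∀ i j : Fin n, v i * B i j * v j
        = (v i * v j + (v i * x i) * (v j * x j))
          + (if i = j then (if n - k ≤ (i : ℕ) then ε * (v i * v j) else 0) else 0) := by
      intro i j
      rw [hBapp]
      by_cases h1 : i = j
      · by_cases h2 : n - k ≤ (i : ℕ)
        · rw [if_pos ⟨h1, h2⟩, if_pos h1, if_pos h2]; ring
        · rw [if_neg (by tauto), if_pos h1, if_neg h2]; ring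
      · rw [if_neg (by tauto), if_neg h1]; ring
    calc ∑ i, ∑ j, v i * B i j * v j
        = (∑ i, (v i * (∑ j, v j) + (v i * x i) * (∑ j, v j * x j)))
          + ∑ i : Fin n, ∑ j : Fin n,
              (if i = j then (if n - k ≤ (i : ℕ) then ε * (v i * v j) else 0) else 0) := by
          rw [← Finset.sum_add_distrib]
          refine Finset.sum_congr rfl fun i _ => ?_
          rw [Finset.mul_sum, Finset.mul_sum, ← Finset.sum_add_distrib,
            ← Finset.sum_add_distrib]
          exact Finset.sum_congr rfl fun j _ => hterm i j
      _ = ((∑ i, v i) * (∑ j, v j) + (∑ i, v i * x i) * (∑ j, v j * x j))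
          + ∑ i : Fin n, (if n - k ≤ (i : ℕ) then ε * (v i * v i) else 0) := by
          congr 1
          · rw [Finset.sum_add_distrib, ← Finset.sum_mul, ← Finset.sum_mul]
          · refine Finset.sum_congr rfl fun i _ => ?_
            rw [Finset.sum_ite_eq]
            rw [if_pos (Finset.mem_univ i)]
      _ ≥ 0 := by
          have h1 : 0 ≤ (∑ i, v i) * (∑ j, v j) := mul_self_nonneg _
          have h2 : 0 ≤ (∑ i, v i * x i) * (∑ j, v j * x j) := mul_self_nonneg _
          have h3 : 0 ≤ ∑ i : Fin n, (if n - k ≤ (i : ℕ) then ε * (v i * v i) else 0) := by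
            refine Finset.sum_nonneg fun i _ => ?_
            by_cases h : n - k ≤ (i : ℕ)
            · rw [if_pos h]; exact mul_nonneg hε (mul_self_nonneg _)
            · rw [if_neg h]
          linarith

/-- For `A_{n,k,ε} = [1 + x_i x_j] + ε R_{n,k}` with `ε > 0` and `α ∈ [0, n-k-2]`,
the `α`th Hadamard power of `A_{n,k,ε}` is positive semi-definite iff `α` is an
integer. -/
theorem hadamard_power_psd_iff_integer_on_initial_segment (n k : ℕ) (hn : 4 ≤ n)
    (hk : 2 ≤ k) (hkn : k + 2 ≤ n) (x : Fin n → ℝ) (hx : Function.Injective x)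
    (hxpos : ∀ i, 0 < x i) (ε : ℝ) (hε : 0 < ε) :
    ∀ α : ℝ, 0 ≤ α → α ≤ (n : ℝ) - (k : ℝ) - 2 →
      ((hadamardPower
          (Matrix.of fun i j : Fin n =>
            (1 + x i * x j) + ε * (if i = j ∧ n - k ≤ (i : ℕ) then 1 else 0))
          α).PosSemidef ↔ ∃ m : ℕ, α = (m : ℝ)) := by
  intro α hα0 hαub
  constructor
  · intro hPSD
    by_contra hno
    push_neg at hno
    set r : ℕ := ⌊α⌋₊ with hr
    have hflr : (r : ℝ) ≤ α := Nat.floor_le hα0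
    have hα1 : (r : ℝ) < α := lt_of_le_of_ne hflr (Ne.symm (hno r))
    have hα2 : α < (r : ℝ) + 1 := Nat.lt_floor_add_one α
    have hkn' : k ≤ n := by omega
    have hcast : ((n - k : ℕ) : ℝ) = (n : ℝ) - (k : ℝ) := by
      rw [Nat.cast_sub hkn']
    have hub' : α < (n : ℝ) - k - 2 := by
      rcases lt_or_eq_of_le hαub with h | h
      · exact h
      · exfalso
        apply hno (n - k - 2)
        rw [h]
        have h2 : 2 ≤ n - k := by omega
        rw [Nat.cast_sub h2, Nat.cast_sub hkn']
        norm_num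
    have hrnk : r + 3 ≤ n - k := by
      have h1 : (r : ℝ) + 2 < ((n - k : ℕ) : ℝ) := by rw [hcast]; linarith
      have h2 : r + 2 < n - k := by exact_mod_cast h1
      omega
    have hpn : r + 3 ≤ n := le_trans hrnk (Nat.sub_le n k)
    set e : Fin (r + 3) → Fin n := Fin.castLE hpn with he
    set z : Fin (r + 3) → ℝ := x ∘ e with hz
    have hsub := hPSD.submatrix e
    have heq : ((hadamardPower
        (Matrix.of fun i j : Fin n =>
          (1 + x i * x j) + ε * (if i = j ∧ n - k ≤ (i : ℕ) then 1 else 0))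
        α).submatrix e e)
        = Matrix.of fun i j => (1 + z i * z j) ^ α := by
      ext i j
      simp only [Matrix.submatrix_apply, hadamardPower, Matrix.of_apply]
      have hcond : ¬ (e i = e j ∧ n - k ≤ ((e i : Fin n) : ℕ)) := by
        rintro ⟨_, hge⟩
        have h1 : ((e i : Fin n) : ℕ) = (i : ℕ) := rfl
        have h2 := i.isLt
        omega
      rw [if_neg hcond]
      rw [mul_zero, add_zero]
      rfl
    rw [heq] at hsub
    exact core_notPSD r α hα1 hα2 z (fun j => hxpos _)
      (hx.comp (Fin.castLE_injective hpn)) hsub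
  · rintro ⟨m, rfl⟩
    have hBpsd := bigB_psd n k x ε hε.le
    have hrw : hadamardPower
        (Matrix.of fun i j : Fin n =>
          (1 + x i * x j) + ε * (if i = j ∧ n - k ≤ (i : ℕ) then 1 else 0)) (m : ℝ)
        = Matrix.of fun i j => (Matrix.of fun i j : Fin n =>
          (1 + x i * x j) + ε * (if i = j ∧ n - k ≤ (i : ℕ) then 1 else 0)) i j ^ m := by
      ext i j
      simp only [hadamardPower, Matrix.of_apply]
      exact Real.rpow_natCast _ m
    rw [hrw]
    exact entry_pow_psd hBpsd m
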